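/- For C ∈ ℝ^n and j ∈ {1, …, n}, define k_j(C) = min{γ_{j(j+1)}(C), x_j + √(max(C_j,0))} − max{γ_{(j−1)j}(C), x_j − √(max(C_j,0))}, with the conventions γ_{01}(C) = −∞ and γ_{n(n+1)}(C) = +∞. Then: (i) C ∈ 𝔾 if and only if k_j(C) > 0 for all j; (ii) if C ∈ 𝔾, then the length of the interval E_j^{(C)} equals k_j(C); and (iii) 𝔾 is a convex subset of ℝ^n. -/

import Mathlib

open MeasureTheory Set
open scoped Classical

/-- `f_j^{(C)}(t) = C_j - (t - x_j)^2`. -/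
noncomputable def fj (n : ℕ) (x C : Fin n → ℝ) (j : Fin n) (t : ℝ) : ℝ :=
  C j - (t - x j) ^ 2

/-- `f^{(C)}(t) = max{f_1^{(C)}(t), …, f_n^{(C)}(t), 0}`. -/
noncomputable def fmax (n : ℕ) (x C : Fin n → ℝ) (t : ℝ) : ℝ :=
  max (⨆ j : Fin n, fj n x C j t) 0

/-- `E_j^{(C)} = {t : f_j^{(C)}(t) = f^{(C)}(t)}`. -/
def Ej (n : ℕ) (x C : Fin n → ℝ) (j : Fin n) : Set ℝ :=
  {t | fj n x C j t = fmax n x C t}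

/-- `F_j(C) = ∫_{E_j^{(C)}} f^{(C)}` if `E_j^{(C)} ≠ ∅`, else `0`. -/
noncomputable def Fj (n : ℕ) (x C : Fin n → ℝ) (j : Fin n) : ℝ :=
  if (Ej n x C j).Nonempty then ∫ t in Ej n x C j, fmax n x C t else 0

/-- `F(C) = (F_1(C), …, F_n(C))`. -/
noncomputable def Fvec (n : ℕ) (x C : Fin n → ℝ) : Fin n → ℝ :=
  fun j => Fj n x C j

/-- `𝔾 = {C : F_j(C) > 0 for all j}`. -/
def Gset (n : ℕ) (x : Fin n → ℝ) : Set (Fin n → ℝ) :=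
  {C | ∀ j, 0 < Fj n x C j}

/-- `γ_{ij}(C) = (C_i - C_j)/(2(x_j - x_i)) + (x_i + x_j)/2`. -/
noncomputable def gam (n : ℕ) (x C : Fin n → ℝ) (i j : Fin n) : ℝ :=
  (C i - C j) / (2 * (x j - x i)) + (x i + x j) / 2

/-- `k_j(C) = min{γ_{j(j+1)}, x_j + √(C_j)_+} - max{γ_{(j-1)j}, x_j - √(C_j)_+}`,
with the conventions `γ_{01} = -∞`, `γ_{n(n+1)} = +∞` (the corresponding term is
dropped from the min/max). -/
noncomputable def kfun (n : ℕ) (x C : Fin n → ℝ) (j : Fin n) : ℝ :=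
  (if h : j.val + 1 < n then
      min (gam n x C j ⟨j.val + 1, h⟩) (x j + Real.sqrt (max (C j) 0))
    else x j + Real.sqrt (max (C j) 0)) -
  (if _ : 0 < j.val then
      max (gam n x C ⟨j.val - 1, lt_of_le_of_lt (Nat.sub_le _ _) j.isLt⟩ j)
        (x j - Real.sqrt (max (C j) 0))
    else x j - Real.sqrt (max (C j) 0))

lemma fj_sub {n : ℕ} {x C : Fin n → ℝ} {i j : Fin n} (hd : x i < x j) (t : ℝ) :
    fj n x C i t - fj n x C j t = 2 * (x i - x j) * (t - gam n x C i j) := by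
  have h : x j - x i ≠ 0 := by linarith
  unfold fj gam
  field_simp
  ring

lemma fj_le_iff {n : ℕ} {x C : Fin n → ℝ} {i j : Fin n} (hd : x i < x j) (t : ℝ) :
    fj n x C i t ≤ fj n x C j t ↔ gam n x C i j ≤ t := by
  have h := fj_sub (C := C) hd t
  constructor <;> intro h2 <;> nlinarith

lemma fj_ge_iff {n : ℕ} {x C : Fin n → ℝ} {i j : Fin n} (hd : x i < x j) (t : ℝ) :
    fj n x C j t ≤ fj n x C i t ↔ t ≤ gam n x C i j := by
  have h := fj_sub (C := C) hd t
  constructor <;> intro h2 <;> nlinarith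


noncomputable def bfun (n : ℕ) (x C : Fin n → ℝ) (j : Fin n) : ℝ :=
  if h : j.val + 1 < n then
      min (gam n x C j ⟨j.val + 1, h⟩) (x j + Real.sqrt (max (C j) 0))
    else x j + Real.sqrt (max (C j) 0)

noncomputable def afun (n : ℕ) (x C : Fin n → ℝ) (j : Fin n) : ℝ :=
  if _ : 0 < j.val then
      max (gam n x C ⟨j.val - 1, lt_of_le_of_lt (Nat.sub_le _ _) j.isLt⟩ j)
        (x j - Real.sqrt (max (C j) 0))
    else x j - Real.sqrt (max (C j) 0)

lemma kfun_eq (n : ℕ) (x C : Fin n → ℝ) (j : Fin n) :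
    kfun n x C j = bfun n x C j - afun n x C j := rfl

lemma afun_ge (n : ℕ) (x C : Fin n → ℝ) (j : Fin n) :
    x j - Real.sqrt (max (C j) 0) ≤ afun n x C j := by
  unfold afun; split_ifs
  · exact le_max_right _ _
  · exact le_rfl

lemma bfun_le (n : ℕ) (x C : Fin n → ℝ) (j : Fin n) :
    bfun n x C j ≤ x j + Real.sqrt (max (C j) 0) := by
  unfold bfun; split_ifs
  · exact min_le_right _ _
  · exact le_rfl

lemma afun_ge_gam (n : ℕ) (x C : Fin n → ℝ) (j : Fin n) (hj : 0 < j.val) :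
    gam n x C ⟨j.val - 1, lt_of_le_of_lt (Nat.sub_le _ _) j.isLt⟩ j ≤ afun n x C j := by
  unfold afun; rw [dif_pos hj]; exact le_max_left _ _

lemma bfun_le_gam (n : ℕ) (x C : Fin n → ℝ) (j : Fin n) (hj : j.val + 1 < n) :
    bfun n x C j ≤ gam n x C j ⟨j.val + 1, hj⟩ := by
  unfold bfun; rw [dif_pos hj]; exact min_le_left _ _

lemma Cpos {n : ℕ} {x C : Fin n → ℝ} {j : Fin n} (hk : 0 < kfun n x C j) : 0 < C j := by
  rw [kfun_eq] at hk
  have h1 := afun_ge n x C j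
  have h2 := bfun_le n x C j
  have hs : 0 < Real.sqrt (max (C j) 0) := by linarith
  have := Real.sqrt_pos.mp hs
  rcases lt_max_iff.mp this with h | h
  · exact h
  · exact absurd h (lt_irrefl 0)

section chain
variable {n : ℕ} {x C : Fin n → ℝ}

lemma chain_step (hk : ∀ j, 0 < kfun n x C j) (m : ℕ) (h1 : m + 1 < n) (h2 : m + 2 < n) :
    gam n x C ⟨m, by omega⟩ ⟨m + 1, h1⟩ ≤ gam n x C ⟨m + 1, h1⟩ ⟨m + 2, h2⟩ := by
  set j : Fin n := ⟨m + 1, h1⟩ with hj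
  have ha : gam n x C ⟨m, by omega⟩ j ≤ afun n x C j := afun_ge_gam n x C j (by simp [hj])
  have hb : bfun n x C j ≤ gam n x C j ⟨m + 2, h2⟩ := bfun_le_gam n x C j h2
  have hkj := hk j
  rw [kfun_eq] at hkj
  linarith

lemma chain_mono (hk : ∀ j, 0 < kfun n x C j) :
    ∀ m m' : ℕ, m ≤ m' → (h : m + 1 < n) → (h' : m' + 1 < n) →
    gam n x C ⟨m, by omega⟩ ⟨m + 1, h⟩ ≤ gam n x C ⟨m', by omega⟩ ⟨m' + 1, h'⟩ := by
  intro m m' hle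
  induction m' with
  | zero => intro h h'; interval_cases m; exact le_rfl
  | succ k ih =>
    intro h h'
    rcases Nat.eq_or_lt_of_le hle with he | hlt
    · subst he; exact le_rfl
    · have hk1 : k + 1 < n := by omega
      exact le_trans (ih (by omega) h hk1) (chain_step hk k hk1 h')

end chain

section upDown
variable {n : ℕ} {x C : Fin n → ℝ} (hx : StrictMono x)

lemma gam_le_of_afun {t : ℝ} (hk : ∀ j, 0 < kfun n x C j) (j : Fin n) (hj : 0 < j.val)
    (ht : afun n x C j ≤ t) (m : ℕ) (hm : m + 1 < n) (hmj : m + 1 ≤ j.val) :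
    gam n x C ⟨m, by omega⟩ ⟨m + 1, hm⟩ ≤ t := by
  have h1 : (j.val - 1) + 1 < n := by omega
  have h2 := chain_mono hk m (j.val - 1) (by omega) hm h1
  have h3 : (⟨(j.val - 1) + 1, h1⟩ : Fin n) = j := Fin.ext (by simp; omega)
  rw [h3] at h2
  exact le_trans h2 (le_trans (afun_ge_gam n x C j hj) ht)

lemma fj_le_of_lt {t : ℝ} (hx : StrictMono x) (hk : ∀ j, 0 < kfun n x C j) (j : Fin n)
    (ht : afun n x C j ≤ t) : ∀ i : Fin n, i < j → fj n x C i t ≤ fj n x C j t := by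
  have key : ∀ m (hm : m + 1 < n), m + 1 ≤ j.val → gam n x C ⟨m, by omega⟩ ⟨m + 1, hm⟩ ≤ t :=
    fun m hm hmj => gam_le_of_afun hk j (by omega) ht m hm hmj
  have main : ∀ d (i : Fin n), j.val = i.val + d + 1 → fj n x C i t ≤ fj n x C j t := by
    intro d
    induction d with
    | zero =>
      intro i hij
      have hm : i.val + 1 < n := by omega
      have hji : j = ⟨i.val + 1, hm⟩ := Fin.ext (by simp [hij])
      have hg := key i.val hm (by omega)
      have hd : x i < x j := hx (show i < j by rw [Fin.lt_def]; omega)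
      rw [fj_le_iff hd, hji]
      exact hg
    | succ d ih =>
      intro i hij
      have hm : i.val + 1 < n := by omega
      set m : Fin n := ⟨i.val + 1, hm⟩ with hmdef
      have h1 : fj n x C i t ≤ fj n x C m t := by
        have hd : x i < x m := hx (show i < m by rw [Fin.lt_def]; simp [hmdef])
        rw [fj_le_iff hd]
        exact key i.val hm (by omega)
      exact le_trans h1 (ih m (by simp [hmdef]; omega))
  intro i hij
  exact main (j.val - i.val - 1) i (by rw [Fin.lt_def] at hij; omega)

end upDown

section down
variable {n : ℕ} {x C : Fin n → ℝ}

lemma gam_ge_of_bfun {t : ℝ} (hk : ∀ j, 0 < kfun n x C j) (j : Fin n)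
    (ht : t ≤ bfun n x C j) (m : ℕ) (hm : m + 1 < n) (hjm : j.val ≤ m) :
    t ≤ gam n x C ⟨m, by omega⟩ ⟨m + 1, hm⟩ := by
  have h1 : j.val + 1 < n := by omega
  have h2 := chain_mono hk j.val m hjm h1 hm
  exact le_trans (le_trans ht (bfun_le_gam n x C j h1)) h2

lemma fj_le_of_gt {t : ℝ} (hx : StrictMono x) (hk : ∀ j, 0 < kfun n x C j) (j : Fin n)
    (ht : t ≤ bfun n x C j) : ∀ i : Fin n, j < i → fj n x C i t ≤ fj n x C j t := by
  have key : ∀ m (hm : m + 1 < n), j.val ≤ m → t ≤ gam n x C ⟨m, by omega⟩ ⟨m + 1, hm⟩ :=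
    fun m hm hjm => gam_ge_of_bfun hk j ht m hm hjm
  have main : ∀ d (i : Fin n), i.val = j.val + d + 1 → fj n x C i t ≤ fj n x C j t := by
    intro d
    induction d with
    | zero =>
      intro i hij
      have hm : j.val + 1 < n := by omega
      have hii : i = ⟨j.val + 1, hm⟩ := Fin.ext (by simp [hij])
      have hd : x j < x i := hx (show j < i by rw [Fin.lt_def]; omega)
      rw [fj_ge_iff hd, hii]
      exact key j.val hm le_rfl
    | succ d ih =>
      intro i hij
      have hm : j.val + d + 1 + 1 < n := by omega
      set m : Fin n := ⟨j.val + d + 1, by omega⟩ with hmdef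
      have hmv : m.val = j.val + d + 1 := rfl
      have hii : i = ⟨m.val + 1, by omega⟩ := Fin.ext (by simp only [hmv]; omega)
      have h1 : fj n x C i t ≤ fj n x C m t := by
        have hd : x m < x i := hx (show m < i by rw [Fin.lt_def]; omega)
        rw [fj_ge_iff hd, hii]
        exact key m.val (by omega) (by omega)
      exact le_trans h1 (ih m rfl)
  intro i hij
  exact main (i.val - j.val - 1) i (by rw [Fin.lt_def] at hij; omega)

end down



section EjLemmas
variable {n : ℕ} {x C : Fin n → ℝ}

lemma sqrt_max_sq (c : ℝ) : Real.sqrt (max c 0) ^ 2 = max c 0 :=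
  Real.sq_sqrt (le_max_right _ _)

lemma Ej_subset (hx : StrictMono x) (j : Fin n) :
    Ej n x C j ⊆ Set.Icc (afun n x C j) (bfun n x C j) := by
  intro t ht
  have ht' : fj n x C j t = fmax n x C t := ht
  have h0 : 0 ≤ fj n x C j t := by rw [ht']; exact le_max_right _ _
  have hbdd : BddAbove (Set.range fun i => fj n x C i t) :=
    Set.Finite.bddAbove (Set.finite_range _)
  have hall : ∀ i, fj n x C i t ≤ fj n x C j t := fun i => by
    rw [ht']; exact le_trans (le_ciSup hbdd i) (le_max_left _ _)
  have hs : (0:ℝ) ≤ Real.sqrt (max (C j) 0) := Real.sqrt_nonneg _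
  have hs2 := sqrt_max_sq (C j)
  have hsq : (t - x j) ^ 2 ≤ Real.sqrt (max (C j) 0) ^ 2 := by
    rw [hs2]
    have : C j - (t - x j) ^ 2 = fj n x C j t := rfl
    nlinarith [le_max_left (C j) 0]
  constructor
  · unfold afun
    split_ifs with hj
    · apply max_le
      · have hd : x ⟨j.val - 1, lt_of_le_of_lt (Nat.sub_le _ _) j.isLt⟩ < x j :=
          hx (by rw [Fin.lt_def]; simp; omega)
        exact (fj_le_iff hd t).mp (hall _)
      · nlinarith
    · nlinarith
  · unfold bfun
    split_ifs with hj
    · apply le_min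
      · have hd : x j < x ⟨j.val + 1, hj⟩ := hx (by rw [Fin.lt_def]; simp)
        exact (fj_ge_iff hd t).mp (hall _)
      · nlinarith
    · nlinarith

lemma Ej_eq (hx : StrictMono x) (hk : ∀ j, 0 < kfun n x C j) (j : Fin n) :
    Ej n x C j = Set.Icc (afun n x C j) (bfun n x C j) := by
  apply Set.Subset.antisymm (Ej_subset hx j)
  intro t ⟨h1, h2⟩
  have hC := Cpos (hk j)
  have hmax : max (C j) 0 = C j := max_eq_left hC.le
  have hs2 := sqrt_max_sq (C j)
  have ha := afun_ge n x C j
  have hb := bfun_le n x C j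
  have h0 : 0 ≤ fj n x C j t := by
    have : fj n x C j t = C j - (t - x j) ^ 2 := rfl
    nlinarith
  have hall : ∀ i, fj n x C i t ≤ fj n x C j t := by
    intro i
    rcases lt_trichotomy i j with h | h | h
    · exact fj_le_of_lt hx hk j h1 i h
    · rw [h]
    · exact fj_le_of_gt hx hk j h2 i h
  have hbdd : BddAbove (Set.range fun i => fj n x C i t) :=
    Set.Finite.bddAbove (Set.finite_range _)
  have : Nonempty (Fin n) := ⟨j⟩
  show fj n x C j t = fmax n x C t
  unfold fmax
  apply le_antisymm
  · exact le_trans (le_ciSup hbdd j) (le_max_left _ _)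
  · exact max_le (ciSup_le hall) h0

end EjLemmas




section FjLemmas
variable {n : ℕ} {x C : Fin n → ℝ}

lemma Fj_pos (hx : StrictMono x) (hk : ∀ j, 0 < kfun n x C j) (j : Fin n) :
    0 < Fj n x C j := by
  have hab : afun n x C j < bfun n x C j := by
    have := hk j; rw [kfun_eq] at this; linarith
  have hE := Ej_eq hx hk j
  have hne : (Ej n x C j).Nonempty := by
    rw [hE]; exact Set.nonempty_Icc.mpr hab.le
  unfold Fj
  rw [if_pos hne, hE]
  have hcongr : ∫ t in Set.Icc (afun n x C j) (bfun n x C j), fmax n x C t =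
      ∫ t in Set.Icc (afun n x C j) (bfun n x C j), fj n x C j t := by
    apply MeasureTheory.setIntegral_congr_fun measurableSet_Icc
    intro t ht
    have : t ∈ Ej n x C j := by rw [hE]; exact ht
    exact this.symm
  rw [hcongr, MeasureTheory.integral_Icc_eq_integral_Ioc,
    ← intervalIntegral.integral_of_le hab.le]
  apply intervalIntegral.intervalIntegral_pos_of_pos_on _ _ hab
  · apply Continuous.intervalIntegrable
    unfold fj
    fun_prop
  · intro t ht
    obtain ⟨h1, h2⟩ := ht
    have hC := Cpos (hk j)
    have hmax : max (C j) 0 = C j := max_eq_left hC.le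
    have hs2 := sqrt_max_sq (C j)
    have ha := afun_ge n x C j
    have hb := bfun_le n x C j
    show 0 < C j - (t - x j) ^ 2
    nlinarith [mul_pos (show (0:ℝ) < x j + Real.sqrt (max (C j) 0) - t by linarith)
      (show (0:ℝ) < t - (x j - Real.sqrt (max (C j) 0)) by linarith)]

lemma kfun_pos_of_Fj_pos (hx : StrictMono x) (hF : ∀ j, 0 < Fj n x C j) (j : Fin n) :
    0 < kfun n x C j := by
  by_contra hle
  push_neg at hle
  rw [kfun_eq] at hle
  have hnull : volume (Ej n x C j) = 0 := by
    apply measure_mono_null (Ej_subset hx j)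
    rw [Real.volume_Icc]
    exact ENNReal.ofReal_eq_zero.mpr (by linarith)
  have : Fj n x C j = 0 := by
    unfold Fj
    split_ifs with h
    · rw [Measure.restrict_eq_zero.mpr hnull, integral_zero_measure]
    · rfl
  have := hF j
  linarith

end FjLemmas

section convexity
variable {n : ℕ} {x : Fin n → ℝ}

lemma sqrt_combo {a b c d : ℝ} (ha : 0 ≤ a) (hb : 0 ≤ b) (hab : a + b = 1)
    (hc : 0 ≤ c) (hd : 0 ≤ d) :
    a * Real.sqrt c + b * Real.sqrt d ≤ Real.sqrt (a * c + b * d) := by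
  have h1 : (0:ℝ) ≤ a * Real.sqrt c + b * Real.sqrt d := by positivity
  have h2 : (0:ℝ) ≤ a * c + b * d := by positivity
  rw [Real.le_sqrt h1 h2]
  have hsc : Real.sqrt c ^ 2 = c := Real.sq_sqrt hc
  have hsd : Real.sqrt d ^ 2 = d := Real.sq_sqrt hd
  conv_rhs => rw [← hsc, ← hsd]
  have hb' : b = 1 - a := by linarith
  subst hb'
  nlinarith [mul_nonneg (mul_nonneg ha hb) (sq_nonneg (Real.sqrt c - Real.sqrt d))]

lemma gam_combo {C D : Fin n → ℝ} {a b : ℝ} (hab : a + b = 1) (i j : Fin n)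
    (hij : x i ≠ x j) :
    gam n x (a • C + b • D) i j = a * gam n x C i j + b * gam n x D i j := by
  unfold gam
  simp only [Pi.add_apply, Pi.smul_apply, smul_eq_mul]
  have h : x j - x i ≠ 0 := sub_ne_zero.mpr (Ne.symm hij)
  field_simp
  linear_combination (x i ^ 2 - x j ^ 2) * hab

lemma combo_pos {a b c d : ℝ} (ha : 0 ≤ a) (hb : 0 ≤ b) (hab : a + b = 1)
    (hc : 0 < c) (hd : 0 < d) : 0 < a * c + b * d := by
  rcases eq_or_lt_of_le ha with h | h
  · have hb1 : b = 1 := by linarith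
    rw [← h, hb1]; simpa using hd
  · nlinarith [mul_pos h hc, mul_nonneg hb hd.le]

lemma kfun_combo (hx : StrictMono x) {C D : Fin n → ℝ} {a b : ℝ}
    (ha : 0 ≤ a) (hb : 0 ≤ b) (hab : a + b = 1) (j : Fin n)
    (hC : 0 < C j) (hD : 0 < D j) :
    a * kfun n x C j + b * kfun n x D j ≤ kfun n x (a • C + b • D) j := by
  set E := a • C + b • D with hE
  have hEj : E j = a * C j + b * D j := rfl
  have hEpos : 0 < E j := by rw [hEj]; exact combo_pos ha hb hab hC hD
  have hmC : max (C j) 0 = C j := max_eq_left hC.le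
  have hmD : max (D j) 0 = D j := max_eq_left hD.le
  have hmE : max (E j) 0 = E j := max_eq_left hEpos.le
  have hsqrt : a * Real.sqrt (max (C j) 0) + b * Real.sqrt (max (D j) 0)
      ≤ Real.sqrt (max (E j) 0) := by
    rw [hmC, hmD, hmE, hEj]
    exact sqrt_combo ha hb hab hC.le hD.le
  have hxj : x j = a * x j + b * x j := by linear_combination (-(x j)) * hab
  have hbf : a * bfun n x C j + b * bfun n x D j ≤ bfun n x E j := by
    unfold bfun
    split_ifs with h
    · have hg : gam n x E j ⟨j.val + 1, h⟩ =
          a * gam n x C j ⟨j.val + 1, h⟩ + b * gam n x D j ⟨j.val + 1, h⟩ :=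
        gam_combo hab _ _ (ne_of_lt (hx (by rw [Fin.lt_def]; simp)))
      apply le_min
      · rw [hg]
        have := min_le_left (gam n x C j ⟨j.val + 1, h⟩) (x j + Real.sqrt (max (C j) 0))
        have := min_le_left (gam n x D j ⟨j.val + 1, h⟩) (x j + Real.sqrt (max (D j) 0))
        nlinarith
      · have := min_le_right (gam n x C j ⟨j.val + 1, h⟩) (x j + Real.sqrt (max (C j) 0))
        have := min_le_right (gam n x D j ⟨j.val + 1, h⟩) (x j + Real.sqrt (max (D j) 0))
        nlinarith
    · nlinarith
  have haf : afun n x E j ≤ a * afun n x C j + b * afun n x D j := by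
    unfold afun
    split_ifs with h
    · have hg : gam n x E ⟨j.val - 1, lt_of_le_of_lt (Nat.sub_le _ _) j.isLt⟩ j =
          a * gam n x C ⟨j.val - 1, lt_of_le_of_lt (Nat.sub_le _ _) j.isLt⟩ j +
          b * gam n x D ⟨j.val - 1, lt_of_le_of_lt (Nat.sub_le _ _) j.isLt⟩ j :=
        gam_combo hab _ _ (ne_of_lt (hx (by rw [Fin.lt_def]; simp; omega)))
      apply max_le
      · rw [hg]
        have := le_max_left (gam n x C ⟨j.val - 1, lt_of_le_of_lt (Nat.sub_le _ _) j.isLt⟩ j)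
          (x j - Real.sqrt (max (C j) 0))
        have := le_max_left (gam n x D ⟨j.val - 1, lt_of_le_of_lt (Nat.sub_le _ _) j.isLt⟩ j)
          (x j - Real.sqrt (max (D j) 0))
        nlinarith
      · have := le_max_right (gam n x C ⟨j.val - 1, lt_of_le_of_lt (Nat.sub_le _ _) j.isLt⟩ j)
          (x j - Real.sqrt (max (C j) 0))
        have := le_max_right (gam n x D ⟨j.val - 1, lt_of_le_of_lt (Nat.sub_le _ _) j.isLt⟩ j)
          (x j - Real.sqrt (max (D j) 0))
        nlinarith
    · nlinarith
  rw [kfun_eq, kfun_eq, kfun_eq]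
  linarith

end convexity

/-- (i) `C ∈ 𝔾` iff `k_j(C) > 0` for all `j`; (ii) for `C ∈ 𝔾` the length of
`E_j^{(C)}` is `k_j(C)`; (iii) `𝔾` is convex. -/
theorem stmt_9 (n : ℕ) (hn : 1 ≤ n) (x : Fin n → ℝ) (hx : StrictMono x) :
    (∀ C : Fin n → ℝ, C ∈ Gset n x ↔ ∀ j, 0 < kfun n x C j) ∧
    (∀ C ∈ Gset n x, ∀ j : Fin n,
      ∃ α β : ℝ, Ej n x C j = Set.Icc α β ∧ β - α = kfun n x C j) ∧
    Convex ℝ (Gset n x) := by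
  have hiff : ∀ C : Fin n → ℝ, C ∈ Gset n x ↔ ∀ j, 0 < kfun n x C j := by
    intro C
    constructor
    · intro hC j; exact kfun_pos_of_Fj_pos hx hC j
    · intro hk j; exact Fj_pos hx hk j
  refine ⟨hiff, ?_, ?_⟩
  · intro C hC j
    have hk := (hiff C).mp hC
    exact ⟨afun n x C j, bfun n x C j, Ej_eq hx hk j, (kfun_eq n x C j).symm⟩
  · intro C hC D hD a b ha hb hab
    rw [hiff] at hC hD ⊢
    intro j
    have h := kfun_combo hx ha hb hab j (Cpos (hC j)) (Cpos (hD j))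
    have h2 := combo_pos ha hb hab (hC j) (hD j)
    linarith
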